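/- arXiv:math/0412438 — 2 statements merged into one kernel-verified Lean document; each statement's English description precedes it below -/
import Mathlib

section
/- Let (μ_k) be a sequence of barycentered Borel probability measures on S² converging weakly to a probability measure ν. Suppose there are points p_k ∈ S² with p_k → a ∈ S², radii r_k → 0, and numbers ε_k → 0 such that μ_k(closed ball of center p_k and radius r_k) ≥ 1/2 − ε_k for every k. Then ν = (1/2)δ_a + (1/2)δ_{−a}. -/
noncomputable section

open MeasureTheory Filter Topology
open scoped ENNReal RealInnerProductSpace

/-- Euclidean 3-space. -/
abbrev E3 : Type := EuclideanSpace ℝ (Fin 3)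

/-- The unit sphere `S²` in `ℝ³`. -/
abbrev S2 : Type := Metric.sphere (0 : E3) 1

/-- A Borel probability measure on the sphere is *barycentered* if every atom has mass
less than `1/2` and its Euclidean center of mass is the origin (equivalently, by
Douady–Earle, its conformal barycenter is the origin). -/
def IsBarycentered (μ : ProbabilityMeasure S2) : Prop :=
  (∀ x : S2, (μ : Measure S2) {x} < 1 / 2) ∧
    (∫ x : S2, (x : E3) ∂(μ : Measure S2)) = 0

/-- The antipode `-x` of a point `x ∈ S²`. -/
def antipode (x : S2) : S2 :=
  ⟨-(x : E3), by
    rw [mem_sphere_zero_iff_norm, norm_neg]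
    exact mem_sphere_zero_iff_norm.mp x.2⟩

lemma norm_S2 (x : S2) : ‖(x : E3)‖ = 1 := mem_sphere_zero_iff_norm.mp x.2

lemma integrable_coe (μ : Measure S2) [IsProbabilityMeasure μ] :
    Integrable (fun x : S2 => (x : E3)) μ := by
  refine (integrable_const (1 : ℝ)).mono' (continuous_subtype_val.aestronglyMeasurable) ?_
  filter_upwards with x
  simp [norm_S2 x]

/-- If barycentered probability measures `μ_k` on `S²` converge weakly to `ν`, and almost
half of the mass of `μ_k` concentrates on closed balls `B(p_k, r_k)` with `p_k → a` and
`r_k → 0`, then `ν = (1/2) δ_a + (1/2) δ_{-a}`. -/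
theorem limit_of_concentrating_barycentered_sequence
    (μk : ℕ → ProbabilityMeasure S2) (hbc : ∀ k, IsBarycentered (μk k))
    (ν : ProbabilityMeasure S2) (hν : Tendsto μk atTop (𝓝 ν))
    (p : ℕ → S2) (a : S2) (hp : Tendsto p atTop (𝓝 a))
    (r : ℕ → ℝ) (hr : Tendsto r atTop (𝓝 0))
    (ε : ℕ → ℝ) (hε : Tendsto ε atTop (𝓝 0))
    (hmass : ∀ k, ENNReal.ofReal (1 / 2 - ε k) ≤
      (μk k : Measure S2) (Metric.closedBall (p k) (r k))) :
    (ν : Measure S2) =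
      (1 / 2 : ℝ≥0∞) • Measure.dirac a + (1 / 2 : ℝ≥0∞) • Measure.dirac (antipode a) := by
  have half_eq : ENNReal.ofReal (1 / 2 : ℝ) = (1 / 2 : ℝ≥0∞) := by
    rw [ENNReal.ofReal_div_of_pos (by norm_num)]
    norm_num
  -- Step A: for every δ > 0, ν (closedBall a δ) ≥ 1/2
  have stepA : ∀ δ : ℝ, 0 < δ → (1 / 2 : ℝ≥0∞) ≤ (ν : Measure S2) (Metric.closedBall a δ) := by
    intro δ hδ
    have hsub : ∀ᶠ k in atTop,
        Metric.closedBall (p k) (r k) ⊆ Metric.closedBall a δ := by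
      have h1 : ∀ᶠ k in atTop, dist (p k) a < δ / 2 :=
        (tendsto_iff_dist_tendsto_zero.mp hp).eventually_lt_const (by linarith)
      have h2 : ∀ᶠ k in atTop, r k < δ / 2 := hr.eventually_lt_const (by linarith)
      filter_upwards [h1, h2] with k hk1 hk2 x hx
      have : dist x (p k) ≤ r k := Metric.mem_closedBall.mp hx
      refine Metric.mem_closedBall.mpr ?_
      calc dist x a ≤ dist x (p k) + dist (p k) a := dist_triangle _ _ _
        _ ≤ δ := by linarith
    have hev : ∀ᶠ k in atTop, ENNReal.ofReal (1 / 2 - ε k) ≤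
        (μk k : Measure S2) (Metric.closedBall a δ) := by
      filter_upwards [hsub] with k hk
      exact le_trans (hmass k) (measure_mono hk)
    have hT : Tendsto (fun k => ENNReal.ofReal (1 / 2 - ε k)) atTop
        (𝓝 (1 / 2 : ℝ≥0∞)) := by
      rw [← half_eq]
      apply ENNReal.tendsto_ofReal
      have := (tendsto_const_nhds (x := (1 / 2 : ℝ))).sub hε
      simpa using this
    have hliminf : (1 / 2 : ℝ≥0∞) ≤ atTop.liminf
        (fun k => (μk k : Measure S2) (Metric.closedBall a δ)) := by
      rw [← hT.liminf_eq]
      exact liminf_le_liminf hev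
    refine le_trans hliminf (le_trans liminf_le_limsup ?_)
    exact ProbabilityMeasure.limsup_measure_closed_le_of_tendsto hν Metric.isClosed_closedBall
  -- Step B: ν {a} ≥ 1/2
  have stepB : (1 / 2 : ℝ≥0∞) ≤ (ν : Measure S2) {a} := by
    set s : ℕ → Set S2 := fun n => Metric.closedBall a ((n + 1 : ℝ)⁻¹) with hs
    have hmono : Antitone s := by
      intro n m hnm
      apply Metric.closedBall_subset_closedBall
      rw [inv_le_inv₀ (by positivity) (by positivity)]
      exact_mod_cast by exact_mod_cast Nat.add_le_add_right hnm 1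
    have hInter : (⋂ n, s n) = {a} := by
      ext x
      simp only [Set.mem_iInter, hs, Metric.mem_closedBall, Set.mem_singleton_iff]
      constructor
      · intro h
        have hlim0 : Tendsto (fun n : ℕ => ((n : ℝ) + 1)⁻¹) atTop (𝓝 0) := by
          simpa only [one_div] using (tendsto_one_div_add_atTop_nhds_zero_nat (𝕜 := ℝ))
        exact dist_le_zero.mp (ge_of_tendsto' hlim0 h)
      · intro h; subst h; intro n; rw [dist_self]; positivity
    have htend : Tendsto (fun n => (ν : Measure S2) (s n)) atTop
        (𝓝 ((ν : Measure S2) {a})) := by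
      rw [← hInter]
      exact tendsto_measure_iInter_atTop
        (fun n => Metric.isClosed_closedBall.measurableSet.nullMeasurableSet) hmono
        ⟨0, measure_ne_top _ _⟩
    exact ge_of_tendsto' htend (fun n => stepA _ (by positivity))
  -- Step C: the barycenter of ν is 0
  have stepC : (∫ x : S2, (x : E3) ∂(ν : Measure S2)) = 0 := by
    rw [← inner_self_eq_zero (𝕜 := ℝ)]
    set I := ∫ x : S2, (x : E3) ∂(ν : Measure S2) with hI
    have key : ∀ v : E3, ⟪v, I⟫ = 0 := by
      intro v
      set f : BoundedContinuousFunction S2 ℝ := BoundedContinuousFunction.mkOfCompact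
        ⟨fun x : S2 => ⟪v, (x : E3)⟫,
          Continuous.inner continuous_const continuous_subtype_val⟩ with hf
      have hfapp : ∀ (μ : Measure S2), ∫ x, f x ∂μ = ∫ x : S2, ⟪v, (x : E3)⟫ ∂μ := by
        intro μ
        simp [hf]
      have hlim := ProbabilityMeasure.tendsto_iff_forall_integral_tendsto.mp hν f
      have hzero : ∀ k, ∫ x, f x ∂(μk k : Measure S2) = 0 := by
        intro k
        rw [hfapp, integral_inner (integrable_coe _) v, (hbc k).2, inner_zero_right]
      have hnu : ∫ x, f x ∂(ν : Measure S2) = 0 := by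
        simp only [hzero] at hlim
        exact tendsto_nhds_unique hlim tendsto_const_nhds
      rw [hI, ← integral_inner (integrable_coe _) v, ← hfapp, hnu]
    exact key I
  -- Step D: equality analysis
  set b := antipode a with hbdef
  have hbcoe : (b : E3) = -(a : E3) := rfl
  have msa : MeasurableSet ({a} : Set S2) := measurableSet_singleton a
  have hfin : (ν : Measure S2) {a} ≠ ∞ := measure_ne_top _ _
  have hfinc : (ν : Measure S2) {a}ᶜ ≠ ∞ := measure_ne_top _ _
  set c : ℝ := ((ν : Measure S2) {a}).toReal with hc
  set c' : ℝ := ((ν : Measure S2) {a}ᶜ).toReal with hc'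
  have hsum : c + c' = 1 := by
    rw [hc, hc', ← ENNReal.toReal_add hfin hfinc, measure_add_measure_compl msa,
      measure_univ, ENNReal.toReal_one]
  have hchalf : (1 : ℝ) / 2 ≤ c := by
    have h := ENNReal.toReal_mono hfin stepB
    rw [← half_eq, ENNReal.toReal_ofReal (by norm_num)] at h
    exact h
  have hIsplit := integral_add_compl msa (integrable_coe (ν : Measure S2))
  set I : E3 := ∫ x in ({a}ᶜ : Set S2), (x : E3) ∂(ν : Measure S2) with hIdef
  have hsing : (∫ x in ({a} : Set S2), (x : E3) ∂(ν : Measure S2)) = c • (a : E3) :=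
    integral_singleton _ a
  have htot : c • (a : E3) + I = 0 := by
    rw [← hsing, hIdef, hIsplit]; exact stepC
  have hIeq : I = -(c • (a : E3)) := eq_neg_of_add_eq_zero_right htot
  have hInorm : ‖I‖ ≤ c' := by
    calc ‖I‖ ≤ ∫ x in ({a}ᶜ : Set S2), ‖(x : E3)‖ ∂(ν : Measure S2) :=
          norm_integral_le_integral_norm _
      _ = c' := by
          simp only [norm_S2]
          rw [setIntegral_const]
          simp [hc']
          rfl
  have hcle : c ≤ c' := by
    have hnormca : ‖c • (a : E3)‖ = c := by
      rw [norm_smul, norm_S2 a, mul_one, Real.norm_eq_abs, abs_of_nonneg (by linarith)]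
    calc c = ‖c • (a : E3)‖ := hnormca.symm
      _ = ‖I‖ := by rw [hIeq, norm_neg]
      _ ≤ c' := hInorm
  have hceq : c = 1 / 2 := by linarith
  have hc'eq : c' = 1 / 2 := by linarith
  have hνa : (ν : Measure S2) {a} = 1 / 2 := by
    rw [← ENNReal.ofReal_toReal hfin, ← hc, hceq, half_eq]
  have hνac : (ν : Measure S2) {a}ᶜ = 1 / 2 := by
    rw [← ENNReal.ofReal_toReal hfinc, ← hc', hc'eq, half_eq]
  have hIval : I = -((1 / 2 : ℝ) • (a : E3)) := by rw [hIeq, hceq]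
  -- the mass on `{a}ᶜ` sits at the antipode
  set g : S2 → ℝ := fun x => 1 - ⟪-(a : E3), (x : E3)⟫ with hg
  have hInnerInt : Integrable (fun x : S2 => ⟪-(a : E3), (x : E3)⟫)
      ((ν : Measure S2).restrict {a}ᶜ) :=
    Integrable.const_inner _ ((integrable_coe (ν : Measure S2)).restrict)
  have hgint : Integrable g ((ν : Measure S2).restrict {a}ᶜ) :=
    (integrable_const 1).sub hInnerInt
  have hgzero : ∫ x in ({a}ᶜ : Set S2), g x ∂(ν : Measure S2) = 0 := by
    have h2 : ∫ x in ({a}ᶜ : Set S2), ⟪-(a : E3), (x : E3)⟫ ∂(ν : Measure S2)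
        = ⟪-(a : E3), I⟫ :=
      integral_inner ((integrable_coe (ν : Measure S2)).restrict) _
    have h3 : ⟪-(a : E3), I⟫ = 1 / 2 := by
      rw [hIval, inner_neg_neg, real_inner_smul_right, real_inner_self_eq_norm_sq,
        norm_S2 a]
      norm_num
    rw [hg]
    rw [integral_sub (integrable_const 1) hInnerInt, h2, h3, setIntegral_const]
    simp only [smul_eq_mul, mul_one, Measure.real, ← hc', hc'eq]
    ring
  have hgnonneg : 0 ≤ᵐ[(ν : Measure S2).restrict {a}ᶜ] g := by
    filter_upwards with x
    have h := real_inner_le_norm (-(a : E3)) ((x : E3))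
    rw [norm_neg, norm_S2 a, norm_S2 x, one_mul] at h
    simp only [hg, Pi.zero_apply]
    linarith
  have hae : g =ᵐ[(ν : Measure S2).restrict {a}ᶜ] 0 :=
    (setIntegral_eq_zero_iff_of_nonneg_ae hgnonneg hgint).mp hgzero
  have haeb : ∀ᵐ x ∂((ν : Measure S2).restrict {a}ᶜ), x = b := by
    filter_upwards [hae] with x hx
    have hxinner : ⟪-(a : E3), (x : E3)⟫ = 1 := by
      simp only [hg, Pi.zero_apply] at hx
      linarith
    have hsq : ‖(x : E3) - (-(a : E3))‖ ^ 2 = 0 := by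
      rw [norm_sub_sq_real, norm_S2 x, norm_neg, norm_S2 a, real_inner_comm, hxinner]
      ring
    have hx0 : (x : E3) = -(a : E3) := sub_eq_zero.mp (norm_eq_zero.mp (sq_eq_zero_iff.mp hsq))
    exact Subtype.ext (by rw [hx0, hbcoe])
  have hnull : (ν : Measure S2) ({b}ᶜ ∩ {a}ᶜ) = 0 := by
    have h0 := ae_iff.mp haeb
    rw [Measure.restrict_apply (by
      have : {x : S2 | ¬ x = b} = ({b}ᶜ : Set S2) := by ext x; simp
      rw [this]; exact (measurableSet_singleton b).compl)] at h0
    have hset : {x : S2 | ¬ x = b} = ({b}ᶜ : Set S2) := by ext x; simp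
    rwa [hset] at h0
  have hne : a ≠ b := by
    intro h
    have h1 : (a : E3) = -(a : E3) := by rw [← hbcoe, h]
    have h3 : (2 : ℝ) • (a : E3) = 0 := by
      rw [two_smul]; nth_rewrite 2 [h1]; simp
    have h2 : (a : E3) = 0 := by
      rcases smul_eq_zero.mp h3 with h | h
      · norm_num at h
      · exact h
    have := norm_S2 a
    rw [h2] at this
    simp at this
  have hνb : (ν : Measure S2) {b} = 1 / 2 := by
    have hdiff := measure_inter_add_diff ({a}ᶜ : Set S2)
      (measurableSet_singleton b) (μ := (ν : Measure S2))
    have h1 : ({a}ᶜ : Set S2) ∩ {b} = {b} := by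
      rw [Set.inter_eq_right, Set.singleton_subset_iff]
      exact fun hmem => hne (hmem.symm)
    have h2 : (ν : Measure S2) (({a}ᶜ : Set S2) \ {b}) = 0 := by
      apply measure_mono_null ?_ hnull
      intro x hx
      exact ⟨hx.2, hx.1⟩
    rw [h1, h2, add_zero, hνac] at hdiff
    exact hdiff
  -- Step E: conclude by evaluating on measurable sets
  have hcompl_null : (ν : Measure S2) (({a} ∪ {b} : Set S2)ᶜ) = 0 := by
    rw [Set.compl_union, Set.inter_comm]
    exact hnull
  refine Measure.ext fun t ht => ?_
  have hmu : MeasurableSet ({a} ∪ {b} : Set S2) :=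
    (measurableSet_singleton a).union (measurableSet_singleton b)
  have ht0 : (ν : Measure S2) (t \ ({a} ∪ {b})) = 0 :=
    measure_mono_null (fun x hx => hx.2) hcompl_null
  have hsplit2 := measure_inter_add_diff t hmu (μ := (ν : Measure S2))
  rw [ht0, add_zero] at hsplit2
  have hdistrib : t ∩ ({a} ∪ {b}) = (t ∩ {a}) ∪ (t ∩ {b}) :=
    Set.inter_union_distrib_left t {a} {b}
  rw [← hsplit2, hdistrib]
  rw [Measure.add_apply, Measure.smul_apply, Measure.smul_apply,
    Measure.dirac_apply' _ ht, Measure.dirac_apply' _ ht, smul_eq_mul, smul_eq_mul]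
  by_cases ha : a ∈ t <;> by_cases hb2 : b ∈ t
  · have e1 : t ∩ {a} = {a} := Set.inter_eq_right.mpr (Set.singleton_subset_iff.mpr ha)
    have e2 : t ∩ {b} = {b} := Set.inter_eq_right.mpr (Set.singleton_subset_iff.mpr hb2)
    rw [e1, e2, measure_union (Set.disjoint_singleton.mpr hne) (measurableSet_singleton b),
      hνa, hνb, Set.indicator_of_mem ha, Set.indicator_of_mem hb2]
    simp
  · have e1 : t ∩ {a} = {a} := Set.inter_eq_right.mpr (Set.singleton_subset_iff.mpr ha)
    have e2 : t ∩ {b} = ∅ := Set.inter_singleton_eq_empty.mpr hb2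
    rw [e1, e2, Set.union_empty, hνa, Set.indicator_of_mem ha, Set.indicator_of_notMem hb2]
    simp
  · have e1 : t ∩ {a} = ∅ := Set.inter_singleton_eq_empty.mpr ha
    have e2 : t ∩ {b} = {b} := Set.inter_eq_right.mpr (Set.singleton_subset_iff.mpr hb2)
    rw [e1, e2, Set.empty_union, hνb, Set.indicator_of_notMem ha, Set.indicator_of_mem hb2]
    simp
  · have e1 : t ∩ {a} = ∅ := Set.inter_singleton_eq_empty.mpr ha
    have e2 : t ∩ {b} = ∅ := Set.inter_singleton_eq_empty.mpr hb2
    rw [e1, e2, Set.union_empty, Set.indicator_of_notMem ha, Set.indicator_of_notMem hb2]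
    simp
end
end

section
/- Fix integers n ≥ q ≥ 2. For τ ∈ ℂ with τ ≠ 0, let A_τ be the degree-1 pair (τ⁻¹·z + τ⁻¹·w, w) (the Möbius map A_τ(z:w) = (τ⁻¹(z+w) : w)), with inverse pair A_τ⁻¹ = (τ·z − w, w). Then there exist nonzero scalars λ_τ ∈ ℂ such that every coefficient of the pair λ_τ·(A_τ ∘ F_{q,τ,n} ∘ A_τ⁻¹) converges, as |τ| → ∞, to the corresponding coefficient of P_{q,n}. -/
noncomputable section

open MvPolynomial

/-- Polynomials in the two variables `z = X 0` and `w = X 1` over `ℂ`. -/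
abbrev MvPoly2 : Type := MvPolynomial (Fin 2) ℂ

/-- A pair of polynomials, representing a point of `Ratbar_d` when both entries are
homogeneous of degree `d` and not both zero. -/
abbrev Pair : Type := MvPoly2 × MvPoly2

/-- `f` is a degree-`d` pair: both entries homogeneous of degree `d`, not both zero. -/
def IsDegPair (d : ℕ) (f : Pair) : Prop :=
  f.1.IsHomogeneous d ∧ f.2.IsHomogeneous d ∧ f ≠ 0

/-- Composition of pairs: substitute the components of `g` into `f`. -/
def comp (f g : Pair) : Pair :=
  (aeval ![g.1, g.2] f.1, aeval ![g.1, g.2] f.2)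

/-- The identity pair `(z, w)`. -/
def idPair : Pair := (X 0, X 1)

/-- Iterates: `iter f n = f^n`, the `n`-fold self-composition, with `f^0` the identity. -/
def iter (f : Pair) : ℕ → Pair
  | 0 => idPair
  | n + 1 => comp f (iter f n)

/-- The linear form `β z - α w` vanishing at the point `(α : β)` of `ℙ¹`. -/
def linForm (v : ℂ × ℂ) : MvPoly2 := C v.2 * X 0 - C v.1 * X 1

/-- Order of vanishing of the linear form of `v` in a polynomial `P`. -/
def ord (v : ℂ × ℂ) (P : MvPoly2) : ℕ := sSup {n : ℕ | linForm v ^ n ∣ P}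

/-- Depth of `v` as a hole of `f`: the multiplicity of `linForm v` in `gcd (f.1, f.2)`. -/
def depth (v : ℂ × ℂ) (f : Pair) : ℕ :=
  sSup {n : ℕ | linForm v ^ n ∣ f.1 ∧ linForm v ^ n ∣ f.2}

/-- The homogeneous form `z Q - w P`, whose vanishing at `v` beyond the depth of the
hole detects that the reduced map fixes `v`. -/
def fixedForm (f : Pair) : MvPoly2 := X 0 * f.2 - X 1 * f.1

/-- `φ_f(v) = v` in the sense of the paper: the multiplicity of `v` as a root of
`z Q - w P` strictly exceeds the depth of `v` as a hole of `f`. -/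
def FixedHole (v : ℂ × ℂ) (f : Pair) : Prop := depth v f < ord v (fixedForm f)

/-- Stability with cutoff `m`: all holes have depth at most `m` and no hole of depth
exactly `m` is fixed by the reduced map. -/
def StableAt (m : ℕ) (f : Pair) : Prop :=
  f ≠ 0 ∧ ∀ v : ℂ × ℂ, v ≠ 0 →
    depth v f ≤ m ∧ (0 < depth v f → depth v f = m → ¬ FixedHole v f)

/-- GIT stability of a degree-`d` pair. -/
def Stable (d : ℕ) (f : Pair) : Prop :=
  if d % 2 = 0 then StableAt (d / 2) f else StableAt ((d - 1) / 2) f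

/-- GIT semistability of a degree-`d` pair. -/
def Semistable (d : ℕ) (f : Pair) : Prop :=
  if d % 2 = 0 then StableAt (d / 2) f else StableAt ((d + 1) / 2) f

/-- The indeterminacy locus: `f ∈ I(d)` iff `f ∘ f` is the zero pair. -/
def IsIndet (f : Pair) : Prop := comp f f = 0

/-- The degree-1 pair `(az + bw, cz + dw)` associated to a `2 × 2` matrix. -/
def matPair (A : Matrix (Fin 2) (Fin 2) ℂ) : Pair :=
  (C (A 0 0) * X 0 + C (A 0 1) * X 1, C (A 1 0) * X 0 + C (A 1 1) * X 1)

/-- Conjugacy of pairs: `g` is a nonzero scalar multiple of `A ∘ f ∘ A⁻¹` for some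
`A ∈ GL₂(ℂ)`. -/
def Conjugate (f g : Pair) : Prop :=
  ∃ A : Matrix.GeneralLinearGroup (Fin 2) ℂ, ∃ c : ℂ, c ≠ 0 ∧
    g = c • comp (matPair (A : Matrix (Fin 2) (Fin 2) ℂ))
        (comp f (matPair ((A⁻¹ : Matrix.GeneralLinearGroup (Fin 2) ℂ) : Matrix (Fin 2) (Fin 2) ℂ)))

/-- The pairs `F_{q,τ,n}` for `0 ≤ n ≤ q`. -/
def Fbase (q : ℕ) (τ : ℂ) (n : ℕ) : Pair :=
  if n = 0 then idPair
  else if n < q then (X 0 ^ 2 ^ (n - 1) * X 1 ^ 2 ^ (n - 1), 0)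
  else (X 0 ^ (2 ^ (q - 1) - 1) * X 1 ^ (2 ^ (q - 1) - 1) *
          (X 0 ^ 2 + C τ * X 0 * X 1 + X 1 ^ 2),
        X 0 ^ 2 ^ (q - 1) * X 1 ^ 2 ^ (q - 1))

/-- The pairs `F_{q,τ,n}`: for `n > q`, `F_{q,τ,n} = F_{q,τ,(n mod q)} ∘ (F_{q,τ,q})^{⌊n/q⌋}`. -/
def FF (q : ℕ) (τ : ℂ) (n : ℕ) : Pair :=
  if n ≤ q then Fbase q τ n
  else comp (Fbase q τ (n % q)) (iter (Fbase q τ q) (n / q))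

/-- The pairs `P_{q,n}` for `0 ≤ n ≤ q`. -/
def Pbase (q : ℕ) (n : ℕ) : Pair :=
  if n = 0 then idPair
  else if n < q then (X 0 ^ 2 ^ (n - 1) * X 1 ^ 2 ^ (n - 1), 0)
  else (X 0 ^ 2 ^ (q - 1) * X 1 ^ (2 ^ (q - 1) - 1) * (X 0 + X 1),
        X 0 ^ 2 ^ (q - 1) * X 1 ^ 2 ^ (q - 1))

/-- The pairs `P_{q,n}`: for `n > q`, `P_{q,n} = P_{q,(n mod q)} ∘ (P_{q,q})^{⌊n/q⌋}`. -/
def PP (q : ℕ) (n : ℕ) : Pair :=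
  if n ≤ q then Pbase q n
  else comp (Pbase q (n % q)) (iter (Pbase q q) (n / q))

/-- The degree-1 pair of the Möbius map `A_τ(z:w) = (τ⁻¹ (z + w) : w)`. -/
def Apair (τ : ℂ) : Pair := (C τ⁻¹ * X 0 + C τ⁻¹ * X 1, X 1)

/-- The degree-1 pair of the inverse Möbius map `A_τ⁻¹(z:w) = (τ z - w : w)`. -/
def ApairInv (τ : ℂ) : Pair := (C τ * X 0 - X 1, X 1)
open Filter Topology

abbrev LL : Filter ℂ := Filter.comap (fun τ : ℂ => ‖τ‖) Filter.atTop

lemma tendsto_inv_LL : Tendsto (fun τ : ℂ => τ⁻¹) LL (𝓝 0) := by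
  rw [tendsto_zero_iff_norm_tendsto_zero]
  have h1 : Tendsto (fun τ : ℂ => ‖τ‖) LL atTop := tendsto_comap
  have := tendsto_inv_atTop_zero.comp h1
  refine this.congr fun τ => ?_
  simp [Function.comp, map_inv₀]

lemma eventually_ne_LL : ∀ᶠ τ : ℂ in LL, τ ≠ 0 := by
  have h1 : Tendsto (fun τ : ℂ => ‖τ‖) LL atTop := tendsto_comap
  filter_upwards [h1.eventually (eventually_ge_atTop 1)] with τ hτ h0
  simp [h0] at hτ; linarith

/-- Coefficientwise convergence of a family of polynomials. -/
def Cvg (p : ℂ → MvPoly2) (P : MvPoly2) : Prop :=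
  ∀ m : Fin 2 →₀ ℕ, Tendsto (fun τ => MvPolynomial.coeff m (p τ)) LL (𝓝 (MvPolynomial.coeff m P))

lemma TC_const (P : MvPoly2) : Cvg (fun _ => P) P := fun _ => tendsto_const_nhds

lemma Cvg.add {p q P Q} (hp : Cvg p P) (hq : Cvg q Q) : Cvg (fun τ => p τ + q τ) (P + Q) := by
  intro m; simpa [MvPolynomial.coeff_add] using (hp m).add (hq m)

lemma Cvg.mul {p q P Q} (hp : Cvg p P) (hq : Cvg q Q) : Cvg (fun τ => p τ * q τ) (P * Q) := by
  intro m
  simp only [MvPolynomial.coeff_mul]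
  exact tendsto_finset_sum _ fun x _ => (hp x.1).mul (hq x.2)

lemma Cvg.pow {p P} (hp : Cvg p P) (k : ℕ) : Cvg (fun τ => p τ ^ k) (P ^ k) := by
  induction k with
  | zero => simpa using TC_const 1
  | succ k ih => simpa [pow_succ] using ih.mul hp

lemma TC_C {c : ℂ → ℂ} {c₀ : ℂ} (hc : Tendsto c LL (𝓝 c₀)) :
    Cvg (fun τ => MvPolynomial.C (c τ)) (MvPolynomial.C c₀) := by
  intro m
  simp only [MvPolynomial.coeff_C]
  split <;> [exact hc; exact tendsto_const_nhds]

open MvPolynomial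

/-- Expansion of `aeval` over a finite set containing the support. -/
lemma aeval_expand (S : Finset (Fin 2 →₀ ℕ)) (p : MvPoly2) (hS : p.support ⊆ S)
    (v1 v2 : MvPoly2) :
    aeval ![v1, v2] p = ∑ s ∈ S, C (coeff s p) * (v1 ^ s 0 * v2 ^ s 1) := by
  conv_lhs => rw [p.as_sum]
  rw [map_sum, Finset.sum_subset hS]
  · refine Finset.sum_congr rfl fun s _ => ?_
    rw [aeval_monomial, Finsupp.prod_fintype _ _ (fun i => pow_zero _)]
    simp [Fin.prod_univ_two, algebraMap_eq]
  · intro s _ hs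
    rw [notMem_support_iff.mp hs]
    simp

lemma coeff_aeval_expand (S : Finset (Fin 2 →₀ ℕ)) (p : MvPoly2) (hS : p.support ⊆ S)
    (v1 v2 : MvPoly2) (m : Fin 2 →₀ ℕ) :
    coeff m (aeval ![v1, v2] p) = ∑ s ∈ S, coeff s p * coeff m (v1 ^ s 0 * v2 ^ s 1) := by
  rw [aeval_expand S p hS, coeff_sum]
  exact Finset.sum_congr rfl fun s _ => by rw [coeff_C_mul]

/-- The finite set of exponents of monomials of degree ≤ bound in two variables. -/
def expSet (d : ℕ) : Finset (Fin 2 →₀ ℕ) :=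
  (Finset.range (d + 1) ×ˢ Finset.range (d + 1)).image
    fun ab => Finsupp.single 0 ab.1 + Finsupp.single 1 ab.2

lemma support_subset_expSet {p : MvPoly2} {d : ℕ} (hp : p.IsHomogeneous d) :
    p.support ⊆ expSet d := by
  intro m hm
  have hd := hp (mem_support_iff.mp hm)
  have hsum : m 0 + m 1 = d := by
    rw [Finsupp.weight_apply, Finsupp.sum_fintype _ _ (by simp), Fin.sum_univ_two] at hd
    simpa using hd
  refine Finset.mem_image.mpr ⟨(m 0, m 1), ?_, ?_⟩
  · simp [Finset.mem_product]; omega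
  · ext i
    fin_cases i <;> simp [Finsupp.single_apply]

lemma cvg_aeval {p : ℂ → MvPoly2} {P : MvPoly2} {S : Finset (Fin 2 →₀ ℕ)}
    (hpS : ∀ τ, (p τ).support ⊆ S) (hPS : P.support ⊆ S) (hp : Cvg p P)
    {g1 g2 : ℂ → MvPoly2} {G1 G2 : MvPoly2} (h1 : Cvg g1 G1) (h2 : Cvg g2 G2) :
    Cvg (fun τ => aeval ![g1 τ, g2 τ] (p τ)) (aeval ![G1, G2] P) := by
  intro m
  have e1 : ∀ τ, coeff m (aeval ![g1 τ, g2 τ] (p τ))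
      = ∑ s ∈ S, coeff s (p τ) * coeff m (g1 τ ^ s 0 * g2 τ ^ s 1) :=
    fun τ => coeff_aeval_expand S _ (hpS τ) _ _ m
  simp only [e1, coeff_aeval_expand S P hPS G1 G2 m]
  exact tendsto_finset_sum _ fun s _ =>
    (hp s).mul (((h1.pow (s 0)).mul (h2.pow (s 1))) m)

/-- Pairwise coefficient convergence. -/
def CvgP (F : ℂ → Pair) (G : Pair) : Prop :=
  Cvg (fun τ => (F τ).1) G.1 ∧ Cvg (fun τ => (F τ).2) G.2

lemma CvgP.comp {F F' : ℂ → Pair} {G G' : Pair} {S : Finset (Fin 2 →₀ ℕ)}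
    (hS1 : ∀ τ, (F τ).1.support ⊆ S) (hS2 : ∀ τ, (F τ).2.support ⊆ S)
    (hG1 : G.1.support ⊆ S) (hG2 : G.2.support ⊆ S)
    (hF : CvgP F G) (hF' : CvgP F' G') :
    CvgP (fun τ => comp (F τ) (F' τ)) (comp G G') :=
  ⟨cvg_aeval hS1 hG1 hF.1 hF'.1 hF'.2,
   cvg_aeval hS2 hG2 hF.2 hF'.1 hF'.2⟩

lemma CvgP.iter {F : ℂ → Pair} {G : Pair} {S : Finset (Fin 2 →₀ ℕ)}
    (hS1 : ∀ τ, (F τ).1.support ⊆ S) (hS2 : ∀ τ, (F τ).2.support ⊆ S)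
    (hG1 : G.1.support ⊆ S) (hG2 : G.2.support ⊆ S)
    (hF : CvgP F G) (k : ℕ) :
    CvgP (fun τ => iter (F τ) k) (iter G k) := by
  induction k with
  | zero => exact ⟨TC_const _, TC_const _⟩
  | succ k ih => exact CvgP.comp hS1 hS2 hG1 hG2 hF ih

/-! ### Algebraic lemmas about `comp` -/

lemma aeval_aeval (u v : Fin 2 → MvPoly2) (p : MvPoly2) :
    aeval v (aeval u p) = aeval (fun i => aeval v (u i)) p := by
  induction p using MvPolynomial.induction_on with
  | C a => simp
  | add p q hp hq => simp only [map_add, hp, hq]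
  | mul_X p i hp => simp only [map_mul, aeval_X, hp]

lemma comp_assoc (f g h : Pair) : comp (comp f g) h = comp f (comp g h) := by
  have hv : (![aeval ![h.1, h.2] g.1, aeval ![h.1, h.2] g.2] : Fin 2 → MvPoly2)
      = fun i => aeval ![h.1, h.2] (![g.1, g.2] i) := by
    funext i; fin_cases i <;> rfl
  simp only [comp, aeval_aeval, hv]

lemma comp_idPair_left (g : Pair) : comp idPair g = g := by
  simp [comp, idPair]

lemma comp_idPair_right (f : Pair) : comp f idPair = f := by
  have hv : (![(X 0 : MvPoly2), X 1] : Fin 2 → MvPoly2) = X := by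
    funext i; fin_cases i <;> rfl
  simp [comp, idPair, hv, aeval_X_left]

lemma pcomp_smul_left (c : ℂ) (f g : Pair) : comp (c • f) g = c • comp f g := by
  simp [comp, Prod.smul_fst, Prod.smul_snd, Prod.smul_mk, map_smul]

/-- `aeval` at scaled values of a homogeneous polynomial. -/
lemma aeval_smul_homog {p : MvPoly2} {d : ℕ} (hp : p.IsHomogeneous d)
    (c : ℂ) (v1 v2 : MvPoly2) :
    aeval ![c • v1, c • v2] p = c ^ d • aeval ![v1, v2] p := by
  rw [aeval_expand p.support p (subset_refl _) v1 v2,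
      aeval_expand p.support p (subset_refl _) (c • v1) (c • v2), Finset.smul_sum]
  refine Finset.sum_congr rfl fun s hs => ?_
  have hd := hp (mem_support_iff.mp hs)
  rw [Finsupp.weight_apply, Finsupp.sum_fintype _ _ (by simp), Fin.sum_univ_two] at hd
  simp only [smul_eq_C_mul, mul_pow, map_pow]
  have : (C c : MvPoly2) ^ s 0 * v1 ^ s 0 * ((C c) ^ s 1 * v2 ^ s 1)
      = (C c) ^ (s 0 + s 1) * (v1 ^ s 0 * v2 ^ s 1) := by ring
  rw [this]
  have : s 0 + s 1 = d := by simpa using hd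
  rw [this]; ring

lemma pcomp_smul_right (c : ℂ) {f : Pair} {d : ℕ}
    (h1 : f.1.IsHomogeneous d) (h2 : f.2.IsHomogeneous d) (g : Pair) :
    comp f (c • g) = c ^ d • comp f g := by
  simp only [comp, Prod.smul_fst, Prod.smul_snd, Prod.smul_mk]
  rw [aeval_smul_homog h1, aeval_smul_homog h2]

/-- Geometric sum for scalar extraction from iterates. -/
def sgeom (d : ℕ) : ℕ → ℕ
  | 0 => 0
  | k + 1 => 1 + d * sgeom d k

lemma iter_smul (c : ℂ) {f : Pair} {d : ℕ}
    (h1 : f.1.IsHomogeneous d) (h2 : f.2.IsHomogeneous d) (k : ℕ) :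
    iter (c • f) k = c ^ sgeom d k • iter f k := by
  induction k with
  | zero => simp [iter, sgeom]
  | succ k ih =>
      rw [iter, ih, pcomp_smul_left, pcomp_smul_right (c ^ sgeom d k) h1 h2, ← iter]
      have hc : c * (c ^ sgeom d k) ^ d = c ^ sgeom d (k + 1) := by
        rw [← pow_mul, show sgeom d (k + 1) = 1 + sgeom d k * d by
          simp [sgeom, Nat.mul_comm], pow_add, pow_one]
      rw [smul_smul, hc]

/-! ### Conjugation by `Apair` -/

def Cj (τ : ℂ) (f : Pair) : Pair := comp (Apair τ) (comp f (ApairInv τ))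

lemma CmulCinv {τ : ℂ} (hτ : τ ≠ 0) : (C τ * C τ⁻¹ : MvPoly2) = 1 := by
  rw [← C_mul, mul_inv_cancel₀ hτ, C_1]

lemma comp_Apair_ApairInv {τ : ℂ} (hτ : τ ≠ 0) :
    comp (Apair τ) (ApairInv τ) = idPair := by
  have h1 := CmulCinv hτ
  simp only [comp, Apair, ApairInv, idPair, map_add, map_mul, map_sub, aeval_C, aeval_X,
    Matrix.cons_val_zero, Matrix.cons_val_one, Matrix.head_cons, Prod.mk.injEq,
    algebraMap_eq]
  refine ⟨?_, trivial⟩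
  linear_combination (X 0 : MvPoly2) * h1

lemma comp_ApairInv_Apair {τ : ℂ} (hτ : τ ≠ 0) :
    comp (ApairInv τ) (Apair τ) = idPair := by
  have h1 := CmulCinv hτ
  simp only [comp, Apair, ApairInv, idPair, map_add, map_mul, map_sub, aeval_C, aeval_X,
    Matrix.cons_val_zero, Matrix.cons_val_one, Matrix.head_cons, Prod.mk.injEq,
    algebraMap_eq]
  refine ⟨?_, trivial⟩
  linear_combination ((X 0 : MvPoly2) + X 1) * h1

lemma Cj_idPair {τ : ℂ} (hτ : τ ≠ 0) : Cj τ idPair = idPair := by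
  rw [Cj, comp_idPair_left, comp_Apair_ApairInv hτ]

lemma Cj_comp {τ : ℂ} (hτ : τ ≠ 0) (f g : Pair) :
    Cj τ (comp f g) = comp (Cj τ f) (Cj τ g) := by
  simp only [Cj, comp_assoc]
  rw [← comp_assoc (ApairInv τ) (Apair τ), comp_ApairInv_Apair hτ, comp_idPair_left]

lemma Cj_iter {τ : ℂ} (hτ : τ ≠ 0) (f : Pair) (k : ℕ) :
    Cj τ (iter f k) = iter (Cj τ f) k := by
  induction k with
  | zero => exact Cj_idPair hτ
  | succ k ih => rw [iter, iter, Cj_comp hτ, ih]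

def Ypoly (τ : ℂ) : MvPoly2 := X 0 - C τ⁻¹ * X 1

lemma Zdef {τ : ℂ} (hτ : τ ≠ 0) : (C τ * X 0 - X 1 : MvPoly2) = C τ * Ypoly τ := by
  rw [Ypoly, mul_sub, ← mul_assoc, CmulCinv hτ, one_mul]

/-- The limit-normalized conjugated generator. -/
def gG (q : ℕ) (τ : ℂ) : Pair :=
  ((Ypoly τ * X 1) ^ (2 ^ (q - 1) - 1) *
      (Ypoly τ * (X 0 + X 1) + C τ⁻¹ ^ 2 * X 1 ^ 2),
   (Ypoly τ * X 1) ^ 2 ^ (q - 1))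

lemma Cj_Fbase_top (q : ℕ) (τ : ℂ) (hq : 2 ≤ q) (hτ : τ ≠ 0) :
    Cj τ (Fbase q τ q) = τ ^ 2 ^ (q - 1) • gG q τ := by
  have h1 := CmulCinv hτ
  have hq0 : ¬ (q = 0) := by omega
  have hqq : ¬ (q < q) := lt_irrefl q
  simp only [Cj, Apair, ApairInv, Fbase, if_neg hq0, if_neg hqq, comp, map_mul, map_pow, map_add, map_sub,
    aeval_X, aeval_C, Matrix.cons_val_zero, Matrix.cons_val_one, Matrix.head_cons,
    algebraMap_eq, gG, Prod.smul_mk, smul_eq_C_mul, Prod.mk.injEq]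
  rw [Zdef hτ]
  set e := 2 ^ (q - 1) - 1 with hE
  have hpow : 2 ^ (q - 1) = e + 1 := by
    have := Nat.one_le_two_pow (n := q - 1); omega
  rw [hpow]
  have hY : C τ * Ypoly τ = C τ * X 0 - X 1 := (Zdef hτ).symm
  constructor
  · linear_combination (Ypoly τ ^ e * X 1 ^ e * C τ ^ e *
        (C τ * Ypoly τ ^ 2 + C τ * Ypoly τ * X 1 + Ypoly τ * X 1 - C τ⁻¹ * X 1 ^ 2)) * h1 +
      (Ypoly τ ^ (e + 1) * X 1 ^ e * C τ ^ e) * hY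
  · ring

/-- Normalized conjugate of the low pieces. -/
def gE (r : ℕ) (τ : ℂ) : Pair :=
  if r = 0 then idPair else ((Ypoly τ * X 1) ^ 2 ^ (r - 1), 0)

lemma Cj_Fbase_low (q r : ℕ) (τ : ℂ) (hr : 1 ≤ r) (hrq : r < q) (hτ : τ ≠ 0) :
    Cj τ (Fbase q τ r) = τ ^ (2 ^ (r - 1) - 1) • gE r τ := by
  have h1 := CmulCinv hτ
  have hr0 : ¬ (r = 0) := by omega
  simp only [Cj, Apair, ApairInv, Fbase, gE, if_neg hr0, if_pos hrq, comp, map_mul, map_pow,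
    map_add, map_sub, aeval_X, aeval_C, Matrix.cons_val_zero, Matrix.cons_val_one,
    Matrix.head_cons, algebraMap_eq, Prod.smul_mk, smul_eq_C_mul, Prod.mk.injEq, map_zero,
    mul_zero, add_zero, smul_zero]
  rw [Zdef hτ]
  set e := 2 ^ (r - 1) - 1 with hE
  have hpow : 2 ^ (r - 1) = e + 1 := by
    have := Nat.one_le_two_pow (n := r - 1); omega
  rw [hpow]
  refine ⟨?_, trivial⟩
  linear_combination (C τ ^ e * Ypoly τ ^ (e + 1) * X 1 ^ (e + 1)) * h1

lemma Cj_Fbase_low' (q r : ℕ) (τ : ℂ) (hrq : r < q) (hτ : τ ≠ 0) :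
    Cj τ (Fbase q τ r) = τ ^ ((if r = 0 then 1 else 2 ^ (r - 1)) - 1) • gE r τ := by
  rcases Nat.eq_zero_or_pos r with h | h
  · subst h
    simp only [if_pos rfl, gE, Fbase]
    simpa using Cj_idPair hτ
  · rw [if_neg (by omega)]
    exact Cj_Fbase_low q r τ h hrq hτ

/-- Decompositions of `FF` and `PP` for `n ≥ q`. -/
lemma FF_eq (q n : ℕ) (τ : ℂ) (hq : 1 ≤ q) (hn : q ≤ n) :
    FF q τ n = comp (Fbase q τ (n % q)) (iter (Fbase q τ q) (n / q)) := by
  rcases eq_or_lt_of_le hn with h | h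
  · subst h
    rw [FF, if_pos le_rfl, Nat.mod_self, Nat.div_self (by omega)]
    show Fbase q τ q = comp (Fbase q τ 0) (comp (Fbase q τ q) (iter (Fbase q τ q) 0))
    rw [show Fbase q τ 0 = idPair from if_pos rfl]
    show Fbase q τ q = comp idPair (comp (Fbase q τ q) idPair)
    rw [comp_idPair_left, comp_idPair_right]
  · rw [FF, if_neg (by omega)]

lemma PP_eq (q n : ℕ) (hq : 1 ≤ q) (hn : q ≤ n) :
    PP q n = comp (Pbase q (n % q)) (iter (Pbase q q) (n / q)) := by
  rcases eq_or_lt_of_le hn with h | h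
  · subst h
    rw [PP, if_pos le_rfl, Nat.mod_self, Nat.div_self (by omega)]
    show Pbase q q = comp (Pbase q 0) (comp (Pbase q q) (iter (Pbase q q) 0))
    rw [show Pbase q 0 = idPair from if_pos rfl]
    show Pbase q q = comp idPair (comp (Pbase q q) idPair)
    rw [comp_idPair_left, comp_idPair_right]
  · rw [PP, if_neg (by omega)]

/-! ### Homogeneity facts -/

lemma Ypoly_homog (τ : ℂ) : (Ypoly τ).IsHomogeneous 1 := by
  refine (isHomogeneous_X ℂ (0 : Fin 2)).sub ?_
  simpa using (isHomogeneous_C (Fin 2) (τ⁻¹)).mul (isHomogeneous_X ℂ (1 : Fin 2))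

lemma YX_homog (τ : ℂ) : (Ypoly τ * X 1).IsHomogeneous 2 :=
  (Ypoly_homog τ).mul (isHomogeneous_X ℂ (1 : Fin 2))

lemma gG_homog (q : ℕ) (τ : ℂ) (hq : 2 ≤ q) :
    (gG q τ).1.IsHomogeneous (2 ^ q) ∧ (gG q τ).2.IsHomogeneous (2 ^ q) := by
  have h2 : 2 * 2 ^ (q - 1) = 2 ^ q := by
    rw [← pow_succ']
    congr 1
    omega
  constructor
  · have hb : (Ypoly τ * (X 0 + X 1) + C τ⁻¹ ^ 2 * X 1 ^ 2).IsHomogeneous 2 := by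
      refine IsHomogeneous.add ?_ ?_
      · simpa using (Ypoly_homog τ).mul ((isHomogeneous_X ℂ (0 : Fin 2)).add (isHomogeneous_X ℂ (1 : Fin 2)))
      · simpa using ((isHomogeneous_C (Fin 2) (τ⁻¹)).pow 2).mul ((isHomogeneous_X ℂ (1 : Fin 2)).pow 2)
    have := ((YX_homog τ).pow (2 ^ (q - 1) - 1)).mul hb
    have harith : 2 * (2 ^ (q - 1) - 1) + 2 = 2 ^ q := by
      have := Nat.one_le_two_pow (n := q - 1); omega
    rw [harith] at this
    exact this
  · have := (YX_homog τ).pow (2 ^ (q - 1))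
    rw [h2] at this
    exact this

lemma gE_homog (r : ℕ) (τ : ℂ) :
    (gE r τ).1.IsHomogeneous (2 ^ r) ∧ (gE r τ).2.IsHomogeneous (2 ^ r) := by
  rcases Nat.eq_zero_or_pos r with h | h
  · subst h
    simp only [gE, if_pos rfl, idPair, pow_zero]
    exact ⟨isHomogeneous_X ℂ (0 : Fin 2), isHomogeneous_X ℂ (1 : Fin 2)⟩
  · rw [gE, if_neg (by omega)]
    have := (YX_homog τ).pow (2 ^ (r - 1))
    have h2 : 2 * 2 ^ (r - 1) = 2 ^ r := by
      rw [← pow_succ']; congr 1; omega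
    rw [h2] at this
    exact ⟨this, isHomogeneous_zero _ _ _⟩

lemma Pbase_top_homog (q : ℕ) (hq : 2 ≤ q) :
    (Pbase q q).1.IsHomogeneous (2 ^ q) ∧ (Pbase q q).2.IsHomogeneous (2 ^ q) := by
  have ha := Nat.one_le_two_pow (n := q - 1)
  have h2 : 2 ^ (q - 1) + 2 ^ (q - 1) = 2 ^ q := by
    have : 2 * 2 ^ (q - 1) = 2 ^ q := by rw [← pow_succ']; congr 1; omega
    omega
  rw [Pbase, if_neg (by omega : ¬ q = 0), if_neg (lt_irrefl q)]
  constructor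
  · have := (((isHomogeneous_X ℂ (0 : Fin 2)).pow (2 ^ (q - 1))).mul
        ((isHomogeneous_X ℂ (1 : Fin 2)).pow (2 ^ (q - 1) - 1))).mul
        ((isHomogeneous_X ℂ (0 : Fin 2)).add (isHomogeneous_X ℂ (1 : Fin 2)))
    have harith : 1 * 2 ^ (q - 1) + 1 * (2 ^ (q - 1) - 1) + 1 = 2 ^ q := by omega
    rw [harith] at this
    exact this
  · have := ((isHomogeneous_X ℂ (0 : Fin 2)).pow (2 ^ (q - 1))).mul
      ((isHomogeneous_X ℂ (1 : Fin 2)).pow (2 ^ (q - 1)))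
    have harith : 1 * 2 ^ (q - 1) + 1 * 2 ^ (q - 1) = 2 ^ q := by omega
    rw [harith] at this
    exact this

lemma Pbase_low_homog (q r : ℕ) (hr : r < q) :
    (Pbase q r).1.IsHomogeneous (2 ^ r) ∧ (Pbase q r).2.IsHomogeneous (2 ^ r) := by
  rcases Nat.eq_zero_or_pos r with h | h
  · subst h
    rw [show Pbase q 0 = idPair from if_pos rfl]
    exact ⟨isHomogeneous_X ℂ (0 : Fin 2), isHomogeneous_X ℂ (1 : Fin 2)⟩
  · rw [Pbase, if_neg (by omega : ¬ r = 0), if_pos hr]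
    have := ((isHomogeneous_X ℂ (0 : Fin 2)).pow (2 ^ (r - 1))).mul
      ((isHomogeneous_X ℂ (1 : Fin 2)).pow (2 ^ (r - 1)))
    have harith : 1 * 2 ^ (r - 1) + 1 * 2 ^ (r - 1) = 2 ^ r := by
      have : 2 * 2 ^ (r - 1) = 2 ^ r := by rw [← pow_succ']; congr 1; omega
      omega
    rw [harith] at this
    exact ⟨this, isHomogeneous_zero _ _ _⟩

/-! ### Convergence of the building blocks -/

lemma Cvg.sub {p q P Q} (hp : Cvg p P) (hq : Cvg q Q) : Cvg (fun τ => p τ - q τ) (P - Q) := by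
  intro m; simpa [MvPolynomial.coeff_sub] using (hp m).sub (hq m)

lemma cvg_Ypoly : Cvg (fun τ => Ypoly τ) (X 0) := by
  have : Cvg (fun τ => (X 0 - C τ⁻¹ * X 1 : MvPoly2)) (X 0 - C (0:ℂ) * X 1) :=
    (TC_const _).sub ((TC_C tendsto_inv_LL).mul (TC_const _))
  simpa [Ypoly] using this

lemma cvg_gG (q : ℕ) (hq : 2 ≤ q) : CvgP (gG q) (Pbase q q) := by
  have ha := Nat.one_le_two_pow (n := q - 1)
  have hYX : Cvg (fun τ => Ypoly τ * X 1) (X 0 * X 1) := cvg_Ypoly.mul (TC_const _)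
  have hP : Pbase q q = ((X 0 * X 1) ^ (2 ^ (q - 1) - 1) *
      (X 0 * (X 0 + X 1) + C (0:ℂ) ^ 2 * X 1 ^ 2), (X 0 * X 1) ^ 2 ^ (q - 1)) := by
    rw [Pbase, if_neg (by omega : ¬ q = 0), if_neg (lt_irrefl q)]
    obtain ⟨e, he⟩ : ∃ e, 2 ^ (q - 1) = e + 1 := ⟨2 ^ (q - 1) - 1, by omega⟩
    rw [he]
    simp only [Nat.add_sub_cancel, Prod.mk.injEq, map_zero]
    constructor <;> ring
  rw [hP]
  constructor
  · exact (hYX.pow _).mul ((cvg_Ypoly.mul (TC_const _)).add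
      (((TC_C tendsto_inv_LL).pow 2).mul (TC_const _)))
  · exact hYX.pow _

lemma cvg_gE (q r : ℕ) (hr : r < q) : CvgP (gE r) (Pbase q r) := by
  rcases Nat.eq_zero_or_pos r with h | h
  · subst h
    rw [show Pbase q 0 = idPair from if_pos rfl]
    have : ∀ τ, gE 0 τ = idPair := fun τ => if_pos rfl
    constructor <;> (intro m; simp only [this]; exact tendsto_const_nhds)
  · rw [Pbase, if_neg (by omega : ¬ r = 0), if_pos hr]
    have h0 : ∀ τ, gE r τ = ((Ypoly τ * X 1) ^ 2 ^ (r - 1), 0) :=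
      fun τ => if_neg (by omega)
    have hP : (X 0 : MvPoly2) ^ 2 ^ (r - 1) * X 1 ^ 2 ^ (r - 1)
        = (X 0 * X 1) ^ 2 ^ (r - 1) := by rw [mul_pow]
    constructor
    · intro m
      simp only [h0]
      rw [hP]
      exact ((cvg_Ypoly.mul (TC_const _)).pow _) m
    · intro m
      simp only [h0]
      exact tendsto_const_nhds

lemma main_eq (q n : ℕ) (hq : 2 ≤ q) (hn : q ≤ n) {τ : ℂ} (hτ : τ ≠ 0) :
    Cj τ (FF q τ n) =
      τ ^ (((if n % q = 0 then 1 else 2 ^ (n % q - 1)) - 1) +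
          2 ^ (q - 1) * sgeom (2 ^ q) (n / q) * 2 ^ (n % q)) •
        comp (gE (n % q) τ) (iter (gG q τ) (n / q)) := by
  have hrq : n % q < q := Nat.mod_lt _ (by omega)
  rw [FF_eq q n τ (by omega) hn, Cj_comp hτ, Cj_iter hτ, Cj_Fbase_top q τ hq hτ,
    Cj_Fbase_low' q (n % q) τ hrq hτ,
    iter_smul _ (gG_homog q τ hq).1 (gG_homog q τ hq).2,
    pcomp_smul_left, pcomp_smul_right _ (gE_homog (n % q) τ).1 (gE_homog (n % q) τ).2,
    smul_smul, ← pow_mul, ← pow_mul, ← pow_add, Nat.mul_assoc]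

theorem FF_tendsto_PP' (q n : ℕ) (hq : 2 ≤ q) (hn : q ≤ n) :
    ∃ lam : ℂ → ℂ, (∀ τ : ℂ, τ ≠ 0 → lam τ ≠ 0) ∧
      ∀ m : Fin 2 →₀ ℕ,
        Filter.Tendsto
            (fun τ : ℂ =>
              coeff m (lam τ • (comp (Apair τ) (comp (FF q τ n) (ApairInv τ))).1))
            (Filter.comap (fun τ : ℂ => ‖τ‖) Filter.atTop)
            (nhds (coeff m (PP q n).1)) ∧
        Filter.Tendsto
            (fun τ : ℂ =>
              coeff m (lam τ • (comp (Apair τ) (comp (FF q τ n) (ApairInv τ))).2))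
            (Filter.comap (fun τ : ℂ => ‖τ‖) Filter.atTop)
            (nhds (coeff m (PP q n).2)) := by
  have hrq : n % q < q := Nat.mod_lt _ (by omega)
  set N := ((if n % q = 0 then 1 else 2 ^ (n % q - 1)) - 1) +
      2 ^ (q - 1) * sgeom (2 ^ q) (n / q) * 2 ^ (n % q) with hN
  refine ⟨fun τ => (τ⁻¹) ^ N, fun τ hτ => pow_ne_zero _ (inv_ne_zero hτ), ?_⟩
  have hcv : CvgP (fun τ => comp (gE (n % q) τ) (iter (gG q τ) (n / q)))
      (comp (Pbase q (n % q)) (iter (Pbase q q) (n / q))) := by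
    refine CvgP.comp (S := expSet (2 ^ (n % q)))
      (fun τ => support_subset_expSet (gE_homog (n % q) τ).1)
      (fun τ => support_subset_expSet (gE_homog (n % q) τ).2)
      (support_subset_expSet (Pbase_low_homog q (n % q) hrq).1)
      (support_subset_expSet (Pbase_low_homog q (n % q) hrq).2)
      (cvg_gE q (n % q) hrq) ?_
    exact CvgP.iter (S := expSet (2 ^ q))
      (fun τ => support_subset_expSet (gG_homog q τ hq).1)
      (fun τ => support_subset_expSet (gG_homog q τ hq).2)
      (support_subset_expSet (Pbase_top_homog q hq).1)
      (support_subset_expSet (Pbase_top_homog q hq).2)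
      (cvg_gG q hq) (n / q)
  have hPP : PP q n = comp (Pbase q (n % q)) (iter (Pbase q q) (n / q)) :=
    PP_eq q n (by omega) hn
  have hkey : ∀ᶠ τ : ℂ in LL,
      (τ⁻¹ ^ N) • comp (Apair τ) (comp (FF q τ n) (ApairInv τ))
        = comp (gE (n % q) τ) (iter (gG q τ) (n / q)) := by
    filter_upwards [eventually_ne_LL] with τ hτ
    have := main_eq q n hq hn hτ
    rw [show comp (Apair τ) (comp (FF q τ n) (ApairInv τ)) = Cj τ (FF q τ n) from rfl,
      this, smul_smul, ← mul_pow, inv_mul_cancel₀ hτ, one_pow, one_smul]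
  intro m
  rw [hPP]
  constructor
  · refine Filter.Tendsto.congr' ?_ (hcv.1 m)
    filter_upwards [hkey] with τ h
    rw [← h, Prod.smul_fst]
  · refine Filter.Tendsto.congr' ?_ (hcv.2 m)
    filter_upwards [hkey] with τ h
    rw [← h, Prod.smul_snd]

/-- For `n ≥ q ≥ 2` there are nonzero scalars `λ_τ` such that every coefficient of
`λ_τ • (A_τ ∘ F_{q,τ,n} ∘ A_τ⁻¹)` converges, as `|τ| → ∞`, to the corresponding
coefficient of `P_{q,n}`. -/
theorem FF_tendsto_PP (q n : ℕ) (hq : 2 ≤ q) (hn : q ≤ n) :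
    ∃ lam : ℂ → ℂ, (∀ τ : ℂ, τ ≠ 0 → lam τ ≠ 0) ∧
      ∀ m : Fin 2 →₀ ℕ,
        Filter.Tendsto
            (fun τ : ℂ =>
              coeff m (lam τ • (comp (Apair τ) (comp (FF q τ n) (ApairInv τ))).1))
            (Filter.comap (fun τ : ℂ => ‖τ‖) Filter.atTop)
            (nhds (coeff m (PP q n).1)) ∧
        Filter.Tendsto
            (fun τ : ℂ =>
              coeff m (lam τ • (comp (Apair τ) (comp (FF q τ n) (ApairInv τ))).2))
            (Filter.comap (fun τ : ℂ => ‖τ‖) Filter.atTop)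
            (nhds (coeff m (PP q n).2)) := by
  exact FF_tendsto_PP' q n hq hn
end
end
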